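/- Let f be the Collatz map, H a complex Hilbert space with orthonormal basis {e_n}_{n≥1}, and T1, T2 the bounded operators with T1 e_n = e_{3n+1} for n odd, T1 e_n = 0 for n even, T2 e_n = e_{n/2} for n even, T2 e_n = 0 for n odd. Then the following are equivalent: (i) there exists n ≥ 1 such that e_n is a cyclic vector for C*(T1,T2); (ii) the Collatz conjecture holds, i.e. 1 ∈ orb(m;f) for every m ≥ 1. -/
import Mathlib


/-- The Collatz map on positive integers: `3n+1` for odd `n`, `n/2` for even `n`. -/
def collatz (n : ℕ+) : ℕ+ :=
  if h : (n : ℕ) % 2 = 1 then 3 * n + 1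
  else ⟨(n : ℕ) / 2, by
    have h2 : 0 < n.1 := n.2
    have h3 : ¬ n.1 % 2 = 1 := h
    show 0 < n.1 / 2
    omega⟩

/-- The forward orbit of `x` under `f`. -/
def orbit {X : Type*} (f : X → X) (x : X) : Set X := Set.range fun k => f^[k] x

/-- The orbit equivalence relation induced by `f`: `x ~ y` iff the orbits meet. -/
def orbEquiv {X : Type*} (f : X → X) (x y : X) : Prop :=
  (orbit f x ∩ orbit f y).Nonempty

/-- The C*-algebra of operators generated by a set `S` of bounded operators on a complex
Hilbert space: the closure of the (non-unital) star subalgebra generated by `S`. -/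
noncomputable def CstarGen {H : Type*} [NormedAddCommGroup H] [InnerProductSpace ℂ H]
    [CompleteSpace H] (S : Set (H →L[ℂ] H)) : Set (H →L[ℂ] H) :=
  closure (NonUnitalStarAlgebra.adjoin ℂ S : Set (H →L[ℂ] H))

/-! ### Auxiliary lemmas -/

open scoped InnerProductSpace

section Aux

lemma collatz_odd (n : ℕ+) (h : (n : ℕ) % 2 = 1) : collatz n = 3 * n + 1 := by
  simp [collatz, h]

lemma collatz_even_coe (n : ℕ+) (h : (n : ℕ) % 2 = 0) :
    ((collatz n : ℕ)) = (n : ℕ) / 2 := by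
  have h' : ¬ (n : ℕ) % 2 = 1 := by omega
  simp [collatz, h']

lemma collatz_two_mul (m : ℕ+) : collatz (2 * m) = m := by
  have h : ((2 * m : ℕ+) : ℕ) % 2 = 0 := by
    push_cast
    omega
  apply PNat.coe_injective
  rw [collatz_even_coe _ h]
  push_cast
  omega

lemma mem_orbit_self' {X : Type*} (f : X → X) (x : X) : x ∈ orbit f x := ⟨0, rfl⟩

lemma iterate_mem_orbit {X : Type*} (f : X → X) (x : X) (k : ℕ) : f^[k] x ∈ orbit f x :=
  ⟨k, rfl⟩

lemma orbEquiv_refl {X : Type*} (f : X → X) (x : X) : orbEquiv f x x :=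
  ⟨x, mem_orbit_self' f x, mem_orbit_self' f x⟩

lemma orbEquiv_symm {X : Type*} {f : X → X} {x y : X} (h : orbEquiv f x y) :
    orbEquiv f y x := by
  obtain ⟨p, h1, h2⟩ := h
  exact ⟨p, h2, h1⟩

lemma orbEquiv_trans {X : Type*} {f : X → X} {x y z : X}
    (h1 : orbEquiv f x y) (h2 : orbEquiv f y z) : orbEquiv f x z := by
  obtain ⟨p, ⟨a, ha⟩, ⟨bk, hb⟩⟩ := h1
  obtain ⟨q, ⟨c, hc⟩, ⟨d, hd⟩⟩ := h2
  simp only at ha hb hc hd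
  refine ⟨f^[max bk c] y, ⟨(max bk c - bk) + a, ?_⟩, ⟨(max bk c - c) + d, ?_⟩⟩
  · show f^[(max bk c - bk) + a] x = f^[max bk c] y
    rw [Function.iterate_add_apply, ha, ← hb, ← Function.iterate_add_apply]
    congr 1
    omega
  · show f^[(max bk c - c) + d] z = f^[max bk c] y
    rw [Function.iterate_add_apply, hd, ← hc, ← Function.iterate_add_apply]
    congr 1
    omega

lemma orbEquiv_collatz_step (k : ℕ+) : orbEquiv collatz (collatz k) k :=
  ⟨collatz k, mem_orbit_self' _ _, ⟨1, by simp⟩⟩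

lemma collatz_iterate_three_mul : ∀ k : ℕ, collatz^[3 * k] 1 = 1 := by
  intro k
  induction k with
  | zero => rfl
  | succ k ih =>
    have h3 : collatz^[3] 1 = 1 := by decide
    have : 3 * (k + 1) = 3 + 3 * k := by ring
    rw [this, Function.iterate_add_apply, ih, h3]

lemma one_mem_orbit_of_orbEquiv {m : ℕ+} (h : orbEquiv collatz m 1) :
    (1 : ℕ+) ∈ orbit collatz m := by
  obtain ⟨p, ⟨a, ha⟩, ⟨c, hc⟩⟩ := h
  simp only at ha hc
  have hd : collatz^[3 - c % 3] p = 1 := by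
    rw [← hc, ← Function.iterate_add_apply]
    have : (3 - c % 3) + c = 3 * (c / 3 + 1) := by omega
    rw [this, collatz_iterate_three_mul]
  refine ⟨(3 - c % 3) + a, ?_⟩
  show collatz^[(3 - c % 3) + a] m = 1
  rw [Function.iterate_add_apply, ha, hd]

variable {H : Type*} [NormedAddCommGroup H] [InnerProductSpace ℂ H] [CompleteSpace H]

lemma hb_ext (b : HilbertBasis ℕ+ ℂ H) {x y : H}
    (h : ∀ j : ℕ+, ⟪b j, x⟫_ℂ = ⟪b j, y⟫_ℂ) : x = y := by
  apply b.repr.injective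
  ext j
  rw [b.repr_apply_apply, b.repr_apply_apply]
  exact h j

lemma adjT1 (b : HilbertBasis ℕ+ ℂ H) (T1 : H →L[ℂ] H)
    (hT1 : ∀ n : ℕ+, T1 (b n) = if (n : ℕ) % 2 = 1 then b (3 * n + 1) else 0)
    (x : ℕ+) (hx : (x : ℕ) % 2 = 1) :
    ContinuousLinearMap.adjoint T1 (b (3 * x + 1)) = b x := by
  have hon := orthonormal_iff_ite.mp b.orthonormal
  apply hb_ext b
  intro j
  rw [ContinuousLinearMap.adjoint_inner_right, hT1 j]
  by_cases hj : (j : ℕ) % 2 = 1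
  · rw [if_pos hj, hon, hon]
    have hiff : (3 * j + 1 = 3 * x + 1) ↔ (j = x) := by
      rw [← PNat.coe_inj, ← PNat.coe_inj]
      push_cast
      omega
    simp only [hiff]
  · rw [if_neg hj, inner_zero_left, hon, if_neg]
    intro hjx
    rw [hjx] at hj
    exact hj hx

lemma adjT2 (b : HilbertBasis ℕ+ ℂ H) (T2 : H →L[ℂ] H)
    (hT2 : ∀ n : ℕ+, T2 (b n) = if (n : ℕ) % 2 = 0 then b (collatz n) else 0)
    (x : ℕ+) (hx : (x : ℕ) % 2 = 0) :
    ContinuousLinearMap.adjoint T2 (b (collatz x)) = b x := by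
  have hon := orthonormal_iff_ite.mp b.orthonormal
  apply hb_ext b
  intro j
  rw [ContinuousLinearMap.adjoint_inner_right, hT2 j]
  by_cases hj : (j : ℕ) % 2 = 0
  · rw [if_pos hj, hon, hon]
    have hiff : (collatz j = collatz x) ↔ (j = x) := by
      rw [← PNat.coe_inj, ← PNat.coe_inj, collatz_even_coe _ hj, collatz_even_coe _ hx]
      have h1 : 0 < (j : ℕ) := j.2
      have h2 : 0 < (x : ℕ) := x.2
      omega
    simp only [hiff]
  · rw [if_neg hj, inner_zero_left, hon, if_neg]
    intro hjx
    rw [hjx] at hj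
    exact hj hx

lemma adjT2_all (b : HilbertBasis ℕ+ ℂ H) (T2 : H →L[ℂ] H)
    (hT2 : ∀ n : ℕ+, T2 (b n) = if (n : ℕ) % 2 = 0 then b (collatz n) else 0)
    (m : ℕ+) : ContinuousLinearMap.adjoint T2 (b m) = b (2 * m) := by
  have h : ((2 * m : ℕ+) : ℕ) % 2 = 0 := by push_cast; omega
  have := adjT2 b T2 hT2 (2 * m) h
  rwa [collatz_two_mul] at this

lemma adjT1_cases (b : HilbertBasis ℕ+ ℂ H) (T1 : H →L[ℂ] H)
    (hT1 : ∀ n : ℕ+, T1 (b n) = if (n : ℕ) % 2 = 1 then b (3 * n + 1) else 0)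
    (m : ℕ+) : ContinuousLinearMap.adjoint T1 (b m) = 0 ∨
      ∃ x : ℕ+, (x : ℕ) % 2 = 1 ∧ collatz x = m ∧
        ContinuousLinearMap.adjoint T1 (b m) = b x := by
  have hon := orthonormal_iff_ite.mp b.orthonormal
  by_cases h : ∃ x : ℕ+, (x : ℕ) % 2 = 1 ∧ 3 * x + 1 = m
  · obtain ⟨x, hx, hxm⟩ := h
    right
    refine ⟨x, hx, by rw [collatz_odd x hx, hxm], ?_⟩
    rw [← hxm]
    exact adjT1 b T1 hT1 x hx
  · left
    apply hb_ext b
    intro j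
    rw [ContinuousLinearMap.adjoint_inner_right, hT1 j, inner_zero_right]
    by_cases hj : (j : ℕ) % 2 = 1
    · rw [if_pos hj, hon, if_neg]
      intro hjm
      exact h ⟨j, hj, hjm⟩
    · rw [if_neg hj, inner_zero_left]

end Aux

/-- Some basis vector `eₙ` is cyclic for `C*(T₁,T₂)` iff the Collatz conjecture holds. -/
theorem cyclic_pair_iff_collatz {H : Type*} [NormedAddCommGroup H] [InnerProductSpace ℂ H]
    [CompleteSpace H] (b : HilbertBasis ℕ+ ℂ H)
    (T1 T2 : H →L[ℂ] H)
    (hT1 : ∀ n : ℕ+, T1 (b n) = if (n : ℕ) % 2 = 1 then b (3 * n + 1) else 0)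
    (hT2 : ∀ n : ℕ+, T2 (b n) = if (n : ℕ) % 2 = 0 then b (collatz n) else 0) :
    (∃ n : ℕ+, closure ((fun A => A (b n)) '' CstarGen {T1, T2}) = Set.univ) ↔
      ∀ m : ℕ+, (1 : ℕ+) ∈ orbit collatz m := by
  classical
  have hon := orthonormal_iff_ite.mp b.orthonormal
  constructor
  · rintro ⟨n, hn⟩
    have hS : ∀ m : ℕ+, orbEquiv collatz m n := by
      intro m
      by_contra hm
      set S : Set ℕ+ := {k | orbEquiv collatz k n} with hSdef
      set V : Submodule ℂ H := (Submodule.span ℂ (b '' S)).topologicalClosure with hVdef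
      -- invariance lifting
      have lift : ∀ (T : H →L[ℂ] H), (∀ y ∈ b '' S, T y ∈ Submodule.span ℂ (b '' S)) →
          ∀ x ∈ V, T x ∈ V := by
        intro T hT x hx
        have h1 : Set.MapsTo T ((Submodule.span ℂ (b '' S) : Submodule ℂ H) : Set H)
            ((Submodule.span ℂ (b '' S) : Submodule ℂ H) : Set H) := by
          intro z hz
          have hz' : T z ∈ Submodule.map (T : H →ₗ[ℂ] H) (Submodule.span ℂ (b '' S)) :=
            Submodule.mem_map_of_mem hz
          rw [Submodule.map_span] at hz'
          refine Submodule.span_le.mpr ?_ hz'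
          rintro _ ⟨y, hy, rfl⟩
          exact hT y hy
        have h2 := h1.closure T.continuous
        have hx' : x ∈ closure ((Submodule.span ℂ (b '' S) : Submodule ℂ H) : Set H) := by
          rw [← Submodule.topologicalClosure_coe]
          exact hx
        have h3 := h2 hx'
        rw [← Submodule.topologicalClosure_coe] at h3
        exact h3
      -- generator conditions
      have hT1S : ∀ y ∈ b '' S, T1 y ∈ Submodule.span ℂ (b '' S) := by
        rintro _ ⟨k, hk, rfl⟩
        rw [hT1 k]
        split_ifs with h
        · refine Submodule.subset_span ⟨3 * k + 1, ?_, rfl⟩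
          have := orbEquiv_trans (orbEquiv_collatz_step k) hk
          rwa [collatz_odd k h] at this
        · exact Submodule.zero_mem _
      have hT2S : ∀ y ∈ b '' S, T2 y ∈ Submodule.span ℂ (b '' S) := by
        rintro _ ⟨k, hk, rfl⟩
        rw [hT2 k]
        split_ifs with h
        · exact Submodule.subset_span ⟨collatz k, orbEquiv_trans (orbEquiv_collatz_step k) hk, rfl⟩
        · exact Submodule.zero_mem _
      have hT1S' : ∀ y ∈ b '' S, (star T1) y ∈ Submodule.span ℂ (b '' S) := by
        rintro _ ⟨k, hk, rfl⟩
        rw [ContinuousLinearMap.star_eq_adjoint]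
        rcases adjT1_cases b T1 hT1 k with h | ⟨x, hxodd, hxc, heq⟩
        · rw [h]; exact Submodule.zero_mem _
        · rw [heq]
          refine Submodule.subset_span ⟨x, ?_, rfl⟩
          have h1 : orbEquiv collatz x (collatz x) := orbEquiv_symm (orbEquiv_collatz_step x)
          rw [hxc] at h1
          exact orbEquiv_trans h1 hk
      have hT2S' : ∀ y ∈ b '' S, (star T2) y ∈ Submodule.span ℂ (b '' S) := by
        rintro _ ⟨k, hk, rfl⟩
        rw [ContinuousLinearMap.star_eq_adjoint, adjT2_all b T2 hT2 k]
        refine Submodule.subset_span ⟨2 * k, ?_, rfl⟩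
        have h1 : orbEquiv collatz (2 * k) (collatz (2 * k)) :=
          orbEquiv_symm (orbEquiv_collatz_step (2 * k))
        rw [collatz_two_mul] at h1
        exact orbEquiv_trans h1 hk
      -- the adjoin preserves V
      have hmain : ∀ A ∈ NonUnitalStarAlgebra.adjoin ℂ ({T1, T2} : Set (H →L[ℂ] H)),
          (∀ x ∈ V, A x ∈ V) ∧ (∀ x ∈ V, (star A) x ∈ V) := by
        intro A hA
        induction hA using NonUnitalStarAlgebra.adjoin_induction with
        | mem x hx =>
          rcases hx with rfl | rfl
          · exact ⟨lift x hT1S, lift (star x) hT1S'⟩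
          · exact ⟨lift x hT2S, lift (star x) hT2S'⟩
        | add x y hx hy ihx ihy =>
          constructor
          · intro z hz
            rw [ContinuousLinearMap.add_apply]
            exact add_mem (ihx.1 z hz) (ihy.1 z hz)
          · intro z hz
            rw [star_add, ContinuousLinearMap.add_apply]
            exact add_mem (ihx.2 z hz) (ihy.2 z hz)
        | zero =>
          constructor
          · intro z hz
            rw [ContinuousLinearMap.zero_apply]
            exact zero_mem _
          · intro z hz
            rw [star_zero, ContinuousLinearMap.zero_apply]
            exact zero_mem _
        | mul x y hx hy ihx ihy =>
          constructor
          · intro z hz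
            rw [ContinuousLinearMap.mul_apply]
            exact ihx.1 _ (ihy.1 z hz)
          · intro z hz
            rw [star_mul, ContinuousLinearMap.mul_apply]
            exact ihy.2 _ (ihx.2 z hz)
        | smul r x hx ih =>
          constructor
          · intro z hz
            rw [ContinuousLinearMap.smul_apply]
            exact Submodule.smul_mem _ _ (ih.1 z hz)
          · intro z hz
            rw [star_smul, ContinuousLinearMap.smul_apply]
            exact Submodule.smul_mem _ _ (ih.2 z hz)
        | star x hx ih =>
          refine ⟨ih.2, ?_⟩
          rw [star_star]
          exact ih.1
      have hbn : b n ∈ V :=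
        Submodule.le_topologicalClosure _
          (Submodule.subset_span ⟨n, orbEquiv_refl collatz n, rfl⟩)
      -- the image lands in V
      have himg : (fun A : H →L[ℂ] H => A (b n)) '' CstarGen {T1, T2} ⊆ (V : Set H) := by
        rintro _ ⟨A, hA, rfl⟩
        have hev : Continuous fun B : H →L[ℂ] H => B (b n) :=
          (ContinuousLinearMap.apply ℂ H (b n)).continuous
        have h1 : A (b n) ∈ (fun B : H →L[ℂ] H => B (b n)) ''
            closure ((NonUnitalStarAlgebra.adjoin ℂ ({T1, T2} : Set (H →L[ℂ] H)) :
              Set (H →L[ℂ] H))) := ⟨A, hA, rfl⟩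
        have h2 := image_closure_subset_closure_image hev h1
        have h3 : (fun B : H →L[ℂ] H => B (b n)) ''
            ((NonUnitalStarAlgebra.adjoin ℂ ({T1, T2} : Set (H →L[ℂ] H)) :
              Set (H →L[ℂ] H))) ⊆ (V : Set H) := by
          rintro _ ⟨B, hB, rfl⟩
          exact (hmain B hB).1 (b n) hbn
        have h4 := closure_mono h3 h2
        rwa [IsClosed.closure_eq (Submodule.isClosed_topologicalClosure _)] at h4
      have hVuniv : (V : Set H) = Set.univ := by
        apply Set.eq_univ_of_univ_subset
        rw [← hn]
        exact closure_minimal himg (Submodule.isClosed_topologicalClosure _)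
      have hbmV : b m ∈ V := by
        rw [← SetLike.mem_coe, hVuniv]
        trivial
      -- but b m is orthogonal to V
      have hzero : ∀ y ∈ (V : Set H), ⟪b m, y⟫_ℂ = 0 := by
        have hsp : ∀ y ∈ Submodule.span ℂ (b '' S), ⟪b m, y⟫_ℂ = 0 := by
          intro y hy
          induction hy using Submodule.span_induction with
          | mem y hy =>
            obtain ⟨k, hk, rfl⟩ := hy
            rw [hon, if_neg]
            intro hmk
            rw [hmk] at hm
            exact hm hk
          | zero => exact inner_zero_right _
          | add u v hu hv ihu ihv => rw [inner_add_right, ihu, ihv, add_zero]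
          | smul a u hu ihu => rw [inner_smul_right, ihu, mul_zero]
        intro y hy
        have hcl : ((Submodule.span ℂ (b '' S) : Submodule ℂ H) : Set H) ⊆
            (innerSL ℂ (b m)) ⁻¹' {0} := by
          intro z hz
          exact hsp z hz
        have hclosed : IsClosed ((innerSL ℂ (b m)) ⁻¹' {0} : Set H) :=
          IsClosed.preimage (innerSL ℂ (b m)).continuous isClosed_singleton
        have : (V : Set H) ⊆ (innerSL ℂ (b m)) ⁻¹' {0} := by
          rw [hVdef, Submodule.topologicalClosure_coe]
          exact closure_minimal hcl hclosed
        exact this hy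
      have h1 : ⟪b m, b m⟫_ℂ = 0 := hzero (b m) hbmV
      rw [hon, if_pos rfl] at h1
      exact one_ne_zero h1
    intro m
    exact one_mem_orbit_of_orbEquiv (orbEquiv_trans (hS m) (orbEquiv_symm (hS 1)))
  · intro hc
    refine ⟨1, ?_⟩
    set M := NonUnitalStarAlgebra.adjoin ℂ ({T1, T2} : Set (H →L[ℂ] H)) with hM
    have hT1mem : T1 ∈ M := NonUnitalStarAlgebra.subset_adjoin ℂ _ (by simp)
    have hT2mem : T2 ∈ M := NonUnitalStarAlgebra.subset_adjoin ℂ _ (by simp)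
    have word : ∀ (k : ℕ) (m : ℕ+), collatz^[k] m = 1 → ∃ A ∈ M, A (b 1) = b m := by
      intro k
      induction k with
      | zero =>
        intro m hm
        rw [Function.iterate_zero_apply] at hm
        subst hm
        refine ⟨star T1 * T1, mul_mem (star_mem hT1mem) hT1mem, ?_⟩
        rw [ContinuousLinearMap.mul_apply, hT1 1, if_pos (by norm_num),
          ContinuousLinearMap.star_eq_adjoint]
        exact adjT1 b T1 hT1 1 (by norm_num)
      | succ k ih =>
        intro m hm
        rw [Function.iterate_succ_apply] at hm
        obtain ⟨A, hAmem, hA⟩ := ih (collatz m) hm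
        by_cases hpar : (m : ℕ) % 2 = 1
        · refine ⟨star T1 * A, mul_mem (star_mem hT1mem) hAmem, ?_⟩
          rw [ContinuousLinearMap.mul_apply, hA, ContinuousLinearMap.star_eq_adjoint,
            collatz_odd m hpar]
          exact adjT1 b T1 hT1 m hpar
        · refine ⟨star T2 * A, mul_mem (star_mem hT2mem) hAmem, ?_⟩
          rw [ContinuousLinearMap.mul_apply, hA, ContinuousLinearMap.star_eq_adjoint]
          exact adjT2 b T2 hT2 m (by omega)
    let ev : (H →L[ℂ] H) →ₗ[ℂ] H := (ContinuousLinearMap.apply ℂ H (b 1)).toLinearMap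
    let P : Submodule ℂ H := Submodule.map ev M.toNonUnitalSubalgebra.toSubmodule
    have hbP : ∀ m : ℕ+, b m ∈ P := by
      intro m
      obtain ⟨k, hk⟩ := hc m
      obtain ⟨A, hAmem, hA⟩ := word k m hk
      exact ⟨A, hAmem, hA⟩
    have hspan : Submodule.span ℂ (Set.range ⇑b) ≤ P :=
      Submodule.span_le.mpr (by rintro _ ⟨m, rfl⟩; exact hbP m)
    have htop : P.topologicalClosure = ⊤ := by
      apply top_unique
      calc (⊤ : Submodule ℂ H) = (Submodule.span ℂ (Set.range ⇑b)).topologicalClosure :=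
            b.dense_span.symm
        _ ≤ P.topologicalClosure := Submodule.topologicalClosure_mono hspan
    have hPuniv : closure (P : Set H) = Set.univ := by
      rw [← Submodule.topologicalClosure_coe, htop]
      rfl
    have hPsub : (P : Set H) ⊆ (fun A : H →L[ℂ] H => A (b 1)) '' CstarGen {T1, T2} := by
      rintro _ ⟨A, hAmem, rfl⟩
      exact ⟨A, subset_closure hAmem, rfl⟩
    apply Set.eq_univ_of_univ_subset
    calc (Set.univ : Set H) = closure (P : Set H) := hPuniv.symm
      _ ⊆ closure ((fun A : H →L[ℂ] H => A (b 1)) '' CstarGen {T1, T2}) := closure_mono hPsub
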